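/- For all ϑ > 0, 0 < t < T, and x ∈ ℝ² ∖ {0}: ∫_{ℝ²} g_t(x−y) K₀(√(2ϑ)‖y‖, ϑ(T−t)) dy = e^{ϑ t} · K₀(√(2ϑ)‖x‖, ϑ T). -/

import Mathlib

open MeasureTheory Real

noncomputable section

/-- The plane `ℝ²`. -/
abbrev E2 := EuclideanSpace ℝ (Fin 2)

/-- The two-dimensional Gaussian heat kernel `g_t(x) = (2πt)⁻¹ exp(−‖x‖²/(2t))`. -/
def gauss (t : ℝ) (x : E2) : ℝ := (2 * π * t)⁻¹ * Real.exp (-‖x‖ ^ 2 / (2 * t))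

/-- The incomplete modified Bessel function of order 0,
`K₀(z,y) = (1/2) ∫_y^∞ a⁻¹ exp(−a − z²/(4a)) da`. -/
def besselK0Inc (z y : ℝ) : ℝ :=
  (1 / 2 : ℝ) * ∫ a in Set.Ioi y, a⁻¹ * Real.exp (-a - z ^ 2 / (4 * a))

open Set

/- ### Auxiliary lemmas -/

lemma integrable_rexp_sq {b : ℝ} (hb : 0 < b) :
    Integrable (fun y : E2 => rexp (-b * ‖y‖ ^ 2)) := by
  have h := (GaussianFourier.integrable_cexp_neg_mul_sq_norm_add (V := E2)
    (b := (b : ℂ)) (by simpa using hb) 0 (0 : E2)).norm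
  refine h.congr (Filter.Eventually.of_forall fun y => ?_)
  simp [Complex.norm_exp, ← Complex.ofReal_pow]

lemma integral_rexp_sq {b : ℝ} (hb : 0 < b) :
    (∫ y : E2, rexp (-b * ‖y‖ ^ 2)) = π / b := by
  rw [GaussianFourier.integral_rexp_neg_mul_sq_norm hb]
  norm_num [finrank_euclideanSpace_fin]

lemma gauss_nonneg {t : ℝ} (ht : 0 < t) (x : E2) : 0 ≤ gauss t x := by
  unfold gauss
  have := pi_pos
  positivity

lemma measurable_gauss_right (w : E2) : Measurable (fun s : ℝ => gauss s w) := by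
  unfold gauss
  fun_prop

lemma continuous_gauss (t : ℝ) : Continuous (gauss t) := by
  unfold gauss
  fun_prop

/-- The 2D Gaussian is integrable. -/
lemma integrable_gauss {s : ℝ} (hs : 0 < s) : Integrable (gauss s) := by
  have : gauss s = fun y : E2 => (2 * π * s)⁻¹ * rexp (-(2 * s)⁻¹ * ‖y‖ ^ 2) := by
    funext y
    unfold gauss
    have h : -‖y‖ ^ 2 / (2 * s) = -(2 * s)⁻¹ * ‖y‖ ^ 2 := by ring
    rw [h]
  rw [this]
  exact (integrable_rexp_sq (by positivity)).const_mul _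

/-- Pointwise "completing the square" identity for the product of two Gaussians. -/
lemma gauss_mul_gauss {t s : ℝ} (ht : 0 < t) (hs : 0 < s) (x y : E2) :
    gauss t (x - y) * gauss s y
      = ((2 * π * t)⁻¹ * (2 * π * s)⁻¹ * rexp (-‖x‖ ^ 2 / (2 * (t + s)))) *
        rexp (-((t + s) / (2 * t * s)) * ‖y - (s / (t + s)) • x‖ ^ 2) := by
  have hts : 0 < t + s := by linarith
  have key : -‖x - y‖ ^ 2 / (2 * t) + -‖y‖ ^ 2 / (2 * s)
      = -‖x‖ ^ 2 / (2 * (t + s)) + -((t + s) / (2 * t * s)) * ‖y - (s / (t + s)) • x‖ ^ 2 := by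
    have h1 : ‖x - y‖ ^ 2 = ‖x‖ ^ 2 - 2 * (inner ℝ x y : ℝ) + ‖y‖ ^ 2 := norm_sub_sq_real x y
    have h2 : ‖y - (s / (t + s)) • x‖ ^ 2
        = ‖y‖ ^ 2 - 2 * ((s / (t + s)) * (inner ℝ x y : ℝ)) + (s / (t + s)) ^ 2 * ‖x‖ ^ 2 := by
      rw [norm_sub_sq_real, real_inner_smul_right, real_inner_comm, norm_smul, mul_pow]
      congr 2
      rw [Real.norm_eq_abs, sq_abs]
    rw [h1, h2]
    field_simp
    ring
  unfold gauss
  calc ((2*π*t)⁻¹ * rexp (-‖x - y‖ ^ 2 / (2 * t))) * ((2*π*s)⁻¹ * rexp (-‖y‖ ^ 2 / (2 * s)))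
      = (2*π*t)⁻¹ * (2*π*s)⁻¹ * rexp (-‖x - y‖ ^ 2 / (2 * t) + -‖y‖ ^ 2 / (2 * s)) := by
        rw [Real.exp_add]; ring
    _ = (2*π*t)⁻¹ * (2*π*s)⁻¹ * rexp (-‖x‖ ^ 2 / (2 * (t + s))
          + -((t + s) / (2 * t * s)) * ‖y - (s / (t + s)) • x‖ ^ 2) := by rw [key]
    _ = _ := by rw [Real.exp_add]; ring

/-- The Gaussian semigroup property in the plane. -/
lemma gauss_conv {t s : ℝ} (ht : 0 < t) (hs : 0 < s) (x : E2) :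
    (∫ y : E2, gauss t (x - y) * gauss s y) = gauss (t + s) x := by
  have hts : 0 < t + s := by linarith
  have hb : 0 < (t + s) / (2 * t * s) := by positivity
  simp_rw [gauss_mul_gauss ht hs x]
  rw [integral_const_mul]
  rw [show (∫ y : E2, rexp (-((t + s) / (2 * t * s)) * ‖y - (s / (t + s)) • x‖ ^ 2))
      = ∫ y : E2, rexp (-((t + s) / (2 * t * s)) * ‖y‖ ^ 2) from
    integral_sub_right_eq_self (fun y : E2 => rexp (-((t + s) / (2 * t * s)) * ‖y‖ ^ 2)) _]
  rw [integral_rexp_sq hb]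
  unfold gauss
  have hπ := pi_pos
  field_simp

lemma integrable_gauss_mul_gauss {t s : ℝ} (ht : 0 < t) (hs : 0 < s) (x : E2) :
    Integrable (fun y : E2 => gauss t (x - y) * gauss s y) := by
  have hts : 0 < t + s := by linarith
  have hb : 0 < (t + s) / (2 * t * s) := by positivity
  have : (fun y : E2 => gauss t (x - y) * gauss s y)
      = fun y : E2 => ((2 * π * t)⁻¹ * (2 * π * s)⁻¹ * rexp (-‖x‖ ^ 2 / (2 * (t + s)))) *
        rexp (-((t + s) / (2 * t * s)) * ‖y - (s / (t + s)) • x‖ ^ 2) := by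
    funext y; exact gauss_mul_gauss ht hs x y
  rw [this]
  exact ((integrable_rexp_sq hb).comp_sub_right _).const_mul _

/-- Rewriting the incomplete Bessel function as an integral of Gaussians. -/
lemma besselK0Inc_eq {ϑ r : ℝ} (hϑ : 0 < ϑ) (hr : 0 < r) (w : E2) :
    besselK0Inc (Real.sqrt (2 * ϑ) * ‖w‖) (ϑ * r)
      = ∫ s in Ioi r, π * rexp (-ϑ * s) * gauss s w := by
  have hz : (Real.sqrt (2 * ϑ) * ‖w‖) ^ 2 = 2 * ϑ * ‖w‖ ^ 2 := by
    rw [mul_pow, sq_sqrt (by positivity)]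
  unfold besselK0Inc
  rw [hz]
  have := integral_comp_mul_left_Ioi
    (fun a : ℝ => a⁻¹ * rexp (-a - 2 * ϑ * ‖w‖ ^ 2 / (4 * a))) r hϑ
  rw [show (∫ a in Ioi (ϑ * r), a⁻¹ * rexp (-a - 2 * ϑ * ‖w‖ ^ 2 / (4 * a)))
      = ϑ • ∫ s in Ioi r, (ϑ * s)⁻¹ * rexp (-(ϑ * s) - 2 * ϑ * ‖w‖ ^ 2 / (4 * (ϑ * s))) by
    rw [this, smul_smul, mul_inv_cancel₀ hϑ.ne', one_smul]]
  rw [smul_eq_mul, ← mul_assoc, ← integral_const_mul]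
  refine setIntegral_congr_fun measurableSet_Ioi (fun s hs => ?_)
  have hs0 : 0 < s := lt_trans hr hs
  have hπ := pi_pos
  unfold gauss
  rw [show -(ϑ * s) - 2 * ϑ * ‖w‖ ^ 2 / (4 * (ϑ * s)) = -(ϑ * s) + -‖w‖ ^ 2 / (2 * s) by
    field_simp; ring, Real.exp_add]
  rw [show -ϑ * s = -(ϑ * s) by ring]
  field_simp

/-- Pointwise bound for the time integrand. -/
lemma expgauss_le {ϑ r : ℝ} (hr : 0 < r) (w : E2) {s : ℝ} (hs : s ∈ Ioi r) :
    π * rexp (-ϑ * s) * gauss s w ≤ (2 * r)⁻¹ * rexp (-ϑ * s) := by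
  have hπ := pi_pos
  have hs0 : 0 < s := lt_trans hr hs
  have h1 : gauss s w ≤ (2 * π * s)⁻¹ := by
    unfold gauss
    nth_rewrite 2 [← mul_one ((2*π*s)⁻¹)]
    refine mul_le_mul_of_nonneg_left ?_ (by positivity)
    rw [exp_le_one_iff, neg_div]
    exact neg_nonpos.2 (by positivity)
  calc π * rexp (-ϑ * s) * gauss s w ≤ π * rexp (-ϑ * s) * (2 * π * s)⁻¹ :=
        mul_le_mul_of_nonneg_left h1 (by positivity)
    _ = (2 * s)⁻¹ * rexp (-ϑ * s) := by field_simp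
    _ ≤ (2 * r)⁻¹ * rexp (-ϑ * s) := by
        gcongr
        exact le_of_lt hs

/-- Integrability of the time integrand. -/
lemma integrableOn_expgauss {ϑ r : ℝ} (hϑ : 0 < ϑ) (hr : 0 < r) (w : E2) :
    IntegrableOn (fun s : ℝ => π * rexp (-ϑ * s) * gauss s w) (Ioi r) := by
  have hπ := pi_pos
  have hm : Measurable (fun s : ℝ => π * rexp (-ϑ * s) * gauss s w) := by
    unfold gauss; fun_prop
  refine Integrable.mono' ((exp_neg_integrableOn_Ioi r hϑ).const_mul ((2 * r)⁻¹))
    hm.aestronglyMeasurable ?_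
  filter_upwards [ae_restrict_mem measurableSet_Ioi] with s hs
  have hs0 : 0 < s := lt_trans hr hs
  rw [Real.norm_eq_abs, abs_of_nonneg (mul_nonneg (by positivity) (gauss_nonneg hs0 w))]
  exact expgauss_le hr w hs

/-- For `ϑ > 0`, `0 < t < T` and `x ≠ 0`,
`∫ g_t(x−y) K₀(√(2ϑ)‖y‖, ϑ(T−t)) dy = e^{ϑt} K₀(√(2ϑ)‖x‖, ϑT)`. -/
theorem gauss_conv_besselK0Inc (ϑ t T : ℝ) (hϑ : 0 < ϑ) (ht : 0 < t) (htT : t < T)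
    (x : E2) (hx : x ≠ 0) :
    (∫ y : E2, gauss t (x - y) * besselK0Inc (Real.sqrt (2 * ϑ) * ‖y‖) (ϑ * (T - t)))
      = Real.exp (ϑ * t) * besselK0Inc (Real.sqrt (2 * ϑ) * ‖x‖) (ϑ * T) := by
  have hπ := pi_pos
  have hr : 0 < T - t := by linarith
  have hT : 0 < T := by linarith
  set ν : Measure ℝ := volume.restrict (Ioi (T - t)) with hν
  set F : E2 × ℝ → ℝ :=
    fun p => gauss t (x - p.1) * (π * rexp (-ϑ * p.2) * gauss p.2 p.1) with hF
  have hFmeas : AEStronglyMeasurable F ((volume : Measure E2).prod ν) := by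
    apply Measurable.aestronglyMeasurable
    unfold F
    unfold gauss
    fun_prop
  -- integrability of the inner time integral, for every y
  have h1 : ∀ y : E2, Integrable (fun s => F (y, s)) ν :=
    fun y => ((integrableOn_expgauss hϑ hr y).const_mul (gauss t (x - y)))
  -- integrability of y ↦ ∫ s ‖F (y, s)‖
  set C : ℝ := ∫ s in Ioi (T - t), (2 * (T - t))⁻¹ * rexp (-ϑ * s) with hCdef
  have hC : 0 ≤ C := integral_nonneg (fun s => by positivity)
  have hkey : ∀ y : E2, (∫ s, ‖F (y, s)‖ ∂ν) ≤ gauss t (x - y) * C := by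
    intro y
    have heq : ∀ s ∈ Ioi (T - t), ‖F (y, s)‖
        = gauss t (x - y) * (π * rexp (-ϑ * s) * gauss s y) := by
      intro s hs
      have hs0 : 0 < s := lt_trans hr hs
      exact norm_of_nonneg (mul_nonneg (gauss_nonneg ht _)
        (mul_nonneg (by positivity) (gauss_nonneg hs0 y)))
    rw [hν, setIntegral_congr_fun measurableSet_Ioi heq, integral_const_mul]
    refine mul_le_mul_of_nonneg_left ?_ (gauss_nonneg ht _)
    exact setIntegral_mono_on (integrableOn_expgauss hϑ hr y)
      ((exp_neg_integrableOn_Ioi (T - t) hϑ).const_mul _) measurableSet_Ioi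
      (fun s hs => expgauss_le hr y hs)
  have h2 : Integrable (fun y : E2 => ∫ s, ‖F (y, s)‖ ∂ν) := by
    refine Integrable.mono' (((integrable_gauss ht).comp_sub_left x).mul_const C)
      hFmeas.norm.integral_prod_right' ?_
    refine Filter.Eventually.of_forall fun y => ?_
    rw [Real.norm_eq_abs, abs_of_nonneg (integral_nonneg (fun s => norm_nonneg _))]
    exact hkey y
  have hprod : Integrable F ((volume : Measure E2).prod ν) :=
    (integrable_prod_iff hFmeas).2 ⟨Filter.Eventually.of_forall h1, h2⟩
  -- Step 1: rewrite the Bessel factor and pull it inside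
  have step1 : (∫ y : E2, gauss t (x - y) * besselK0Inc (Real.sqrt (2 * ϑ) * ‖y‖) (ϑ * (T - t)))
      = ∫ y : E2, ∫ s, F (y, s) ∂ν := by
    refine integral_congr_ae (Filter.Eventually.of_forall fun y => ?_)
    simp only [hF]
    rw [besselK0Inc_eq hϑ hr y, hν]
    exact (integral_const_mul _ _).symm
  -- Step 2: Fubini
  have step2 : (∫ y : E2, ∫ s, F (y, s) ∂ν) = ∫ s, ∫ y : E2, F (y, s) ∂volume ∂ν :=
    integral_integral_swap hprod
  -- Step 3: Gaussian semigroup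
  have step3 : (∫ s, ∫ y : E2, F (y, s) ∂volume ∂ν)
      = ∫ s in Ioi (T - t), π * rexp (-ϑ * s) * gauss (t + s) x := by
    rw [hν]
    refine setIntegral_congr_fun measurableSet_Ioi fun s hs => ?_
    have hs0 : 0 < s := lt_trans hr hs
    have : ∀ y : E2, F (y, s)
        = (π * rexp (-ϑ * s)) * (gauss t (x - y) * gauss s y) := fun y => by
      simp only [hF]; ring
    simp only [this]
    rw [integral_const_mul, gauss_conv ht hs0 x]
  -- Step 4: translation u = s + t
  have step4 : (∫ s in Ioi (T - t), π * rexp (-ϑ * s) * gauss (t + s) x)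
      = ∫ u in Ioi T, π * rexp (-ϑ * (u - t)) * gauss u x := by
    have h := (measurePreserving_add_right (volume : Measure ℝ) t).setIntegral_preimage_emb
      (MeasurableEquiv.addRight t).measurableEmbedding
      (fun u => π * rexp (-ϑ * (u - t)) * gauss u x) (Ioi T)
    rw [preimage_add_const_Ioi] at h
    rw [← h]
    refine setIntegral_congr_fun measurableSet_Ioi fun s hs => ?_
    rw [add_sub_cancel_right, add_comm t s]
  -- Step 5: pull out exp(ϑ t)
  have step5 : (∫ u in Ioi T, π * rexp (-ϑ * (u - t)) * gauss u x)
      = Real.exp (ϑ * t) * ∫ u in Ioi T, π * rexp (-ϑ * u) * gauss u x := by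
    rw [← integral_const_mul]
    refine setIntegral_congr_fun measurableSet_Ioi fun u hu => ?_
    rw [show rexp (ϑ * t) * (π * rexp (-ϑ * u) * gauss u x)
        = π * (rexp (ϑ * t) * rexp (-ϑ * u)) * gauss u x by ring, ← Real.exp_add,
      show ϑ * t + -ϑ * u = -ϑ * (u - t) by ring]
  rw [step1, step2, step3, step4, step5, ← besselK0Inc_eq hϑ hT x]
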